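/- arXiv:1003.4772 — 2 statements merged into one kernel-verified Lean document; each statement's English description precedes it below -/
import Mathlib

section
/- Čebyšev's inequality for Riemann–Stieltjes Δ-integrals: if f_1 and f_2 are similarly ordered ((f_1(t)−f_1(s))(f_2(t)−f_2(s)) ≥ 0 for all t,s) and p ≥ 0, then (∫_a^b p Δg)(∫_a^b p·f_1·f_2 Δg) ≥ (∫_a^b p·f_1 Δg)(∫_a^b p·f_2 Δg). -/
open Set

/-- A partition `a = t 0 < t 1 < ... < t n = b` of `[a,b] ∩ T`. -/
structure TSPartition (T : Set ℝ) (a b : ℝ) where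
  n : ℕ
  t : Fin (n + 1) → ℝ
  strictMono : StrictMono t
  mem : ∀ i, t i ∈ T
  first : t 0 = a
  last : t (Fin.last n) = b

/-- The set of points of a partition. -/
def TSPartition.points {T : Set ℝ} {a b : ℝ} (P : TSPartition T a b) : Set ℝ :=
  Set.range P.t

/-- A selection of points for a partition: `x i ∈ [t i, t (i+1)) ∩ T`. -/
def IsSelection {T : Set ℝ} {a b : ℝ} (P : TSPartition T a b) (X : Fin P.n → ℝ) : Prop :=
  ∀ i : Fin P.n, X i ∈ T ∧ P.t i.castSucc ≤ X i ∧ X i < P.t i.succ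

/-- The Riemann–Stieltjes Δ-sum `Σ f(x i)(g(t (i+1)) − g(t i))`. -/
def RSsum {T : Set ℝ} {a b : ℝ} (f g : ℝ → ℝ) (P : TSPartition T a b)
    (X : Fin P.n → ℝ) : ℝ :=
  ∑ i : Fin P.n, f (X i) * (g (P.t i.succ) - g (P.t i.castSucc))

/-- `f` is Riemann–Stieltjes Δ-integrable w.r.t. `g` on `[a,b] ∩ T` with value `I`. -/
def IsRSIntegral (T : Set ℝ) (a b : ℝ) (f g : ℝ → ℝ) (I : ℝ) : Prop :=
  ∀ ε > 0, ∃ P₀ : TSPartition T a b, ∀ P : TSPartition T a b,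
    P₀.points ⊆ P.points → ∀ X : Fin P.n → ℝ, IsSelection P X →
      |RSsum f g P X - I| < ε

/-- Forward jump operator `σ` of a time scale. -/
noncomputable def tsSigma (T : Set ℝ) (t : ℝ) : ℝ := sInf {s | s ∈ T ∧ t < s}

/-- Backward jump operator `ρ` of a time scale. -/
noncomputable def tsRho (T : Set ℝ) (t : ℝ) : ℝ := sSup {s | s ∈ T ∧ s < t}

/-- `f` is rd-continuous on `[a,b] ∩ T`: continuous (within the time scale) at
right-dense points, and possessing finite left-sided limits at left-dense points. -/
def RdContinuousOn (T : Set ℝ) (a b : ℝ) (f : ℝ → ℝ) : Prop :=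
  (∀ t ∈ Set.Icc a b ∩ T, tsSigma T t = t →
      ContinuousWithinAt f (Set.Icc a b ∩ T) t) ∧
  (∀ t ∈ Set.Icc a b ∩ T, tsRho T t = t →
      ∃ L, Filter.Tendsto f (nhdsWithin t ((Set.Icc a b ∩ T) ∩ Set.Iio t)) (nhds L))

/-- Double Riemann–Stieltjes Δ-sum. -/
def RSsum2 {T₁ T₂ : Set ℝ} {a b c d : ℝ} (f : ℝ → ℝ → ℝ) (g₁ g₂ : ℝ → ℝ)
    (P : TSPartition T₁ a b) (Q : TSPartition T₂ c d)
    (X : Fin P.n → ℝ) (Y : Fin Q.n → ℝ) : ℝ :=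
  ∑ i : Fin P.n, ∑ j : Fin Q.n,
    f (X i) (Y j) * (g₁ (P.t i.succ) - g₁ (P.t i.castSucc)) *
      (g₂ (Q.t j.succ) - g₂ (Q.t j.castSucc))

/-- `f` is double Riemann–Stieltjes Δ-integrable w.r.t. `g₁, g₂` on
`([a,b) ∩ T₁) × ([c,d) ∩ T₂)` with value `I`. -/
def IsRSIntegral2 (T₁ T₂ : Set ℝ) (a b c d : ℝ) (f : ℝ → ℝ → ℝ)
    (g₁ g₂ : ℝ → ℝ) (I : ℝ) : Prop :=
  ∀ ε > 0, ∃ (P₀ : TSPartition T₁ a b) (Q₀ : TSPartition T₂ c d),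
    ∀ (P : TSPartition T₁ a b) (Q : TSPartition T₂ c d),
      P₀.points ⊆ P.points → Q₀.points ⊆ Q.points →
      ∀ (X : Fin P.n → ℝ) (Y : Fin Q.n → ℝ),
        IsSelection P X → IsSelection Q Y →
          |RSsum2 f g₁ g₂ P Q X Y - I| < ε

/-- Lower Darboux–Stieltjes sum. -/
noncomputable def lowerDS {T : Set ℝ} {a b : ℝ} (f g : ℝ → ℝ)
    (P : TSPartition T a b) : ℝ :=
  ∑ i : Fin P.n,
    sInf (f '' (Set.Ico (P.t i.castSucc) (P.t i.succ) ∩ T)) *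
      (g (P.t i.succ) - g (P.t i.castSucc))

/-- Upper Darboux–Stieltjes sum. -/
noncomputable def upperDS {T : Set ℝ} {a b : ℝ} (f g : ℝ → ℝ)
    (P : TSPartition T a b) : ℝ :=
  ∑ i : Fin P.n,
    sSup (f '' (Set.Ico (P.t i.castSucc) (P.t i.succ) ∩ T)) *
      (g (P.t i.succ) - g (P.t i.castSucc))


lemma cheb_sum {n : ℕ} (c u v : Fin n → ℝ) (hc : ∀ i, 0 ≤ c i)
    (h : ∀ i j, 0 ≤ (u i - u j) * (v i - v j)) :
    (∑ i, c i * u i) * (∑ i, c i * v i) ≤ (∑ i, c i) * (∑ i, c i * (u i * v i)) := by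
  have key : 0 ≤ ∑ i, ∑ j, c i * c j * ((u i - u j) * (v i - v j)) := by
    apply Finset.sum_nonneg; intro i _
    apply Finset.sum_nonneg; intro j _
    exact mul_nonneg (mul_nonneg (hc i) (hc j)) (h i j)
  have expand : (∑ i, ∑ j, c i * c j * ((u i - u j) * (v i - v j)))
      = (∑ i, c i) * (∑ j, c j * (u j * v j)) + (∑ i, c i * (u i * v i)) * (∑ j, c j)
        - (∑ i, c i * u i) * (∑ j, c j * v j) - (∑ i, c i * v i) * (∑ j, c j * u j) := by
    rw [Finset.sum_mul_sum, Finset.sum_mul_sum, Finset.sum_mul_sum, Finset.sum_mul_sum]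
    rw [← Finset.sum_add_distrib, ← Finset.sum_sub_distrib, ← Finset.sum_sub_distrib]
    apply Finset.sum_congr rfl; intro i _
    rw [← Finset.sum_add_distrib, ← Finset.sum_sub_distrib, ← Finset.sum_sub_distrib]
    apply Finset.sum_congr rfl; intro j _
    ring
  linarith [key, expand]

lemma exists_part (T : Set ℝ) (a b : ℝ) (s : Finset ℝ) (hsub : ↑s ⊆ T)
    (has : a ∈ s) (hbs : b ∈ s) (hbound : ∀ x ∈ s, a ≤ x ∧ x ≤ b) :
    ∃ P : TSPartition T a b, P.points = ↑s := by
  have hpos : 0 < s.card := Finset.card_pos.2 ⟨a, has⟩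
  have hcard : s.card = (s.card - 1) + 1 := (Nat.succ_pred_eq_of_pos hpos).symm
  let e := s.orderIsoOfFin hcard
  have hmin : ∀ x ∈ s, ((e 0 : s) : ℝ) ≤ x := by
    intro x hx
    have := e.monotone (Fin.zero_le (e.symm ⟨x, hx⟩))
    simp at this; exact this
  have hmax : ∀ x ∈ s, x ≤ ((e (Fin.last _) : s) : ℝ) := by
    intro x hx
    have := e.monotone (Fin.le_last (e.symm ⟨x, hx⟩))
    simp at this; exact this
  refine ⟨⟨s.card - 1, fun i => (e i : ℝ), ?_, ?_, ?_, ?_⟩, ?_⟩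
  · intro i j hij
    exact_mod_cast e.strictMono hij
  · intro i; exact hsub (e i).2
  · exact le_antisymm (hmin a has) ((hbound _ (e 0).2).1)
  · exact le_antisymm ((hbound _ (e (Fin.last _)).2).2) (hmax b hbs)
  · ext x
    simp only [TSPartition.points, Set.mem_range, Finset.coe_sort_coe, Finset.mem_coe]
    constructor
    · rintro ⟨i, rfl⟩; exact (e i).2
    · intro hx; exact ⟨e.symm ⟨x, hx⟩, by simp⟩

lemma part_bounds {T : Set ℝ} {a b : ℝ} (P : TSPartition T a b) (i : Fin (P.n + 1)) :
    a ≤ P.t i ∧ P.t i ≤ b := by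
  constructor
  · calc a = P.t 0 := P.first.symm
      _ ≤ P.t i := P.strictMono.monotone (Fin.zero_le i)
  · calc P.t i ≤ P.t (Fin.last P.n) := P.strictMono.monotone (Fin.le_last i)
      _ = b := P.last

lemma prod_close (x y x' y' δ : ℝ) (hδ : δ ≤ 1) (hx : |x' - x| < δ) (hy : |y' - y| < δ) :
    |x' * y' - x * y| ≤ δ * (|x| + |y| + 1) := by
  have h1 : |x'| ≤ |x| + 1 := by
    have := abs_sub_abs_le_abs_sub x' x; linarith [hx.le]
  have h2 : x' * y' - x * y = x' * (y' - y) + (x' - x) * y := by ring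
  calc |x' * y' - x * y| = |x' * (y' - y) + (x' - x) * y| := by rw [h2]
    _ ≤ |x' * (y' - y)| + |(x' - x) * y| := abs_add_le _ _
    _ = |x'| * |y' - y| + |x' - x| * |y| := by rw [abs_mul, abs_mul]
    _ ≤ (|x| + 1) * δ + δ * |y| := by
        exact add_le_add (mul_le_mul h1 hy.le (abs_nonneg _) (by positivity))
          (mul_le_mul_of_nonneg_right hx.le (abs_nonneg _))
    _ = δ * (|x| + |y| + 1) := by ring

/-- Čebyšev's inequality for RS Δ-integrals:
`(∫ p Δg)(∫ p f₁ f₂ Δg) ≥ (∫ p f₁ Δg)(∫ p f₂ Δg)`. -/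
theorem rs_chebyshev (T : Set ℝ) (hT : IsClosed T) (a b : ℝ)
    (ha : a ∈ T) (hb : b ∈ T) (hab : a < b) (p f₁ f₂ g : ℝ → ℝ)
    (hp : ∀ t ∈ Set.Icc a b ∩ T, 0 ≤ p t)
    (hpc : RdContinuousOn T a b p) (hf₁c : RdContinuousOn T a b f₁)
    (hf₂c : RdContinuousOn T a b f₂)
    (hord : ∀ t ∈ Set.Icc a b ∩ T, ∀ s ∈ Set.Icc a b ∩ T,
      0 ≤ (f₁ t - f₁ s) * (f₂ t - f₂ s))
    (hg : MonotoneOn g (Set.Icc a b ∩ T))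
    (A B C D : ℝ)
    (hA : IsRSIntegral T a b p g A)
    (hB : IsRSIntegral T a b (fun t => p t * f₁ t * f₂ t) g B)
    (hC : IsRSIntegral T a b (fun t => p t * f₁ t) g C)
    (hD : IsRSIntegral T a b (fun t => p t * f₂ t) g D) :
    C * D ≤ A * B := by
  -- Main approximation claim
  have main : ∀ δ > 0, ∃ A' B' C' D' : ℝ,
      |A' - A| < δ ∧ |B' - B| < δ ∧ |C' - C| < δ ∧ |D' - D| < δ ∧ C' * D' ≤ A' * B' := by
    intro δ hδ
    obtain ⟨PA, hPA⟩ := hA δ hδ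
    obtain ⟨PB, hPB⟩ := hB δ hδ
    obtain ⟨PC, hPC⟩ := hC δ hδ
    obtain ⟨PD, hPD⟩ := hD δ hδ
    set s : Finset ℝ := (Finset.image PA.t Finset.univ ∪ Finset.image PB.t Finset.univ) ∪
        (Finset.image PC.t Finset.univ ∪ Finset.image PD.t Finset.univ) with hs
    have hsub : ↑s ⊆ T := by
      intro x hx
      simp only [hs, Finset.coe_union, Set.mem_union, Finset.coe_image, Set.mem_image] at hx
      rcases hx with (⟨⟨i, _, rfl⟩ | ⟨i, _, rfl⟩⟩ | ⟨⟨i, _, rfl⟩ | ⟨i, _, rfl⟩⟩) <;>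
        first
          | exact PA.mem i
          | exact PB.mem i
          | exact PC.mem i
          | exact PD.mem i
    have has : a ∈ s := by
      simp only [hs, Finset.mem_union, Finset.mem_image]
      exact Or.inl (Or.inl ⟨0, Finset.mem_univ _, PA.first⟩)
    have hbs : b ∈ s := by
      simp only [hs, Finset.mem_union, Finset.mem_image]
      exact Or.inl (Or.inl ⟨Fin.last _, Finset.mem_univ _, PA.last⟩)
    have hbound : ∀ x ∈ s, a ≤ x ∧ x ≤ b := by
      intro x hx
      simp only [hs, Finset.mem_union, Finset.mem_image] at hx
      rcases hx with (⟨⟨i, _, rfl⟩ | ⟨i, _, rfl⟩⟩ | ⟨⟨i, _, rfl⟩ | ⟨i, _, rfl⟩⟩) <;>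
        first
          | exact part_bounds PA i
          | exact part_bounds PB i
          | exact part_bounds PC i
          | exact part_bounds PD i
    obtain ⟨P, hPpts⟩ := exists_part T a b s hsub has hbs hbound
    have hrefA : PA.points ⊆ P.points := by
      rw [hPpts]; rintro x ⟨i, rfl⟩
      simp only [hs, Finset.coe_union, Set.mem_union, Finset.coe_image, Set.mem_image]
      exact Or.inl (Or.inl ⟨i, Finset.mem_univ _, rfl⟩)
    have hrefB : PB.points ⊆ P.points := by
      rw [hPpts]; rintro x ⟨i, rfl⟩
      simp only [hs, Finset.coe_union, Set.mem_union, Finset.coe_image, Set.mem_image]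
      exact Or.inl (Or.inr ⟨i, Finset.mem_univ _, rfl⟩)
    have hrefC : PC.points ⊆ P.points := by
      rw [hPpts]; rintro x ⟨i, rfl⟩
      simp only [hs, Finset.coe_union, Set.mem_union, Finset.coe_image, Set.mem_image]
      exact Or.inr (Or.inl ⟨i, Finset.mem_univ _, rfl⟩)
    have hrefD : PD.points ⊆ P.points := by
      rw [hPpts]; rintro x ⟨i, rfl⟩
      simp only [hs, Finset.coe_union, Set.mem_union, Finset.coe_image, Set.mem_image]
      exact Or.inr (Or.inr ⟨i, Finset.mem_univ _, rfl⟩)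
    set X : Fin P.n → ℝ := fun i => P.t i.castSucc with hXdef
    have hX : IsSelection P X := fun i =>
      ⟨P.mem _, le_refl _, P.strictMono (Fin.castSucc_lt_succ (i := i))⟩
    have hXmem : ∀ i, X i ∈ Set.Icc a b ∩ T := by
      intro i
      exact ⟨⟨(part_bounds P i.castSucc).1, (part_bounds P i.castSucc).2⟩, P.mem _⟩
    have htmem : ∀ i : Fin (P.n + 1), P.t i ∈ Set.Icc a b ∩ T := by
      intro i
      exact ⟨⟨(part_bounds P i).1, (part_bounds P i).2⟩, P.mem _⟩
    have hΔ : ∀ i : Fin P.n, 0 ≤ g (P.t i.succ) - g (P.t i.castSucc) := by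
      intro i
      have := hg (htmem i.castSucc) (htmem i.succ)
        (P.strictMono.monotone (Fin.castSucc_lt_succ (i := i)).le)
      linarith
    set c : Fin P.n → ℝ := fun i => p (X i) * (g (P.t i.succ) - g (P.t i.castSucc)) with hcdef
    set u : Fin P.n → ℝ := fun i => f₁ (X i) with hudef
    set v : Fin P.n → ℝ := fun i => f₂ (X i) with hvdef
    have hc : ∀ i, 0 ≤ c i := fun i => mul_nonneg (hp _ (hXmem i)) (hΔ i)
    have hcheb := cheb_sum c u v hc (fun i j => hord _ (hXmem i) _ (hXmem j))
    have eA : RSsum p g P X = ∑ i, c i := rfl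
    have eB : RSsum (fun t => p t * f₁ t * f₂ t) g P X = ∑ i, c i * (u i * v i) := by
      unfold RSsum
      apply Finset.sum_congr rfl; intro i _
      simp only [hcdef, hudef, hvdef]; ring
    have eC : RSsum (fun t => p t * f₁ t) g P X = ∑ i, c i * u i := by
      unfold RSsum
      apply Finset.sum_congr rfl; intro i _
      simp only [hcdef, hudef]; ring
    have eD : RSsum (fun t => p t * f₂ t) g P X = ∑ i, c i * v i := by
      unfold RSsum
      apply Finset.sum_congr rfl; intro i _
      simp only [hcdef, hvdef]; ring
    refine ⟨RSsum p g P X, RSsum (fun t => p t * f₁ t * f₂ t) g P X,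
      RSsum (fun t => p t * f₁ t) g P X, RSsum (fun t => p t * f₂ t) g P X,
      hPA P hrefA X hX, hPB P hrefB X hX, hPC P hrefC X hX, hPD P hrefD X hX, ?_⟩
    rw [eA, eB, eC, eD]
    exact hcheb
  -- Conclude by approximation
  have hfinal : ∀ ε > 0, C * D ≤ A * B + ε := by
    intro ε hε
    set K : ℝ := |A| + |B| + |C| + |D| + 2 with hK
    have hKpos : 0 < K := by positivity
    set δ : ℝ := min 1 (ε / K) with hδdef
    have hδpos : 0 < δ := lt_min one_pos (div_pos hε hKpos)
    have hδ1 : δ ≤ 1 := min_le_left _ _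
    obtain ⟨A', B', C', D', hA', hB', hC', hD', hle⟩ := main δ hδpos
    have h1 : |C' * D' - C * D| ≤ δ * (|C| + |D| + 1) := prod_close C D C' D' δ hδ1 hC' hD'
    have h2 : |A' * B' - A * B| ≤ δ * (|A| + |B| + 1) := prod_close A B A' B' δ hδ1 hA' hB'
    have h1' := abs_le.1 h1
    have h2' := abs_le.1 h2
    have hδK : δ * K ≤ ε := by
      have : δ ≤ ε / K := min_le_right _ _
      calc δ * K ≤ (ε / K) * K := by nlinarith
        _ = ε := div_mul_cancel₀ ε (ne_of_gt hKpos)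
    have : C * D ≤ A * B + δ * K := by
      have := h1'.1
      have := h2'.2
      simp only [hK]
      nlinarith [hle]
    linarith
  exact le_of_forall_pos_le_add hfinal
end

section
/- Majorisation theorem for Riemann–Stieltjes Δ-integrals: if y and x−y are both non-decreasing (or both non-increasing) on [a,b]_T, ∫_a^b p·y Δg = ∫_a^b p·x Δg, and F is continuous convex, then ∫_a^b p(t)F(y(t)) Δg(t) ≤ ∫_a^b p(t)F(x(t)) Δg(t). -/
open Set

lemma TSPartition.t_mem_Icc {T : Set ℝ} {a b : ℝ} (P : TSPartition T a b)
    (j : Fin (P.n + 1)) : P.t j ∈ Icc a b :=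
  ⟨by have h := P.strictMono.monotone (Fin.zero_le j); rwa [P.first] at h,
   by have h := P.strictMono.monotone (Fin.le_last j); rwa [P.last] at h⟩

lemma exists_partition_of_finset (T : Set ℝ) (a b : ℝ)
    (S : Finset ℝ) (hST : ∀ x ∈ S, x ∈ T) (hSa : a ∈ S) (hSb : b ∈ S)
    (hSI : ∀ x ∈ S, x ∈ Icc a b) :
    ∃ P : TSPartition T a b, P.points = ↑S := by
  have hpos : 0 < S.card := Finset.card_pos.2 ⟨a, hSa⟩
  have hcard : S.card = (S.card - 1) + 1 := (Nat.succ_pred_eq_of_pos hpos).symm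
  set n := S.card - 1 with hn
  have hc : S.card = n + 1 := hcard
  set t : Fin (n + 1) → ℝ := fun i => S.orderEmbOfFin hc i with ht
  have hmem' : ∀ i, t i ∈ S := fun i => S.orderEmbOfFin_mem hc i
  have hsm : StrictMono t := (S.orderEmbOfFin hc).strictMono
  have hfirst : t 0 = a := by
    have h0 : t 0 = S.min' ⟨a, hSa⟩ := by
      have := Finset.orderEmbOfFin_zero hc (Nat.succ_pos n)
      simpa [ht] using this
    rw [h0]
    exact le_antisymm (Finset.min'_le S a hSa)
      (Finset.le_min' _ _ _ (fun y hy => (hSI y hy).1))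
  have hlast : t (Fin.last n) = b := by
    have h0 : t (Fin.last n) = S.max' ⟨a, hSa⟩ := by
      have := Finset.orderEmbOfFin_last hc (Nat.succ_pos n)
      simpa [ht, Fin.last] using this
    rw [h0]
    exact le_antisymm (Finset.max'_le _ _ _ (fun y hy => (hSI y hy).2))
      (Finset.le_max' S b hSb)
  refine ⟨⟨n, t, hsm, fun i => hST _ (hmem' i), hfirst, hlast⟩, ?_⟩
  show Set.range t = ↑S
  simpa [ht] using S.range_orderEmbOfFin hc

lemma exists_refinement (T : Set ℝ) (a b : ℝ)
    (P₁ P₂ P₃ P₄ : TSPartition T a b) :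
    ∃ P : TSPartition T a b, P₁.points ⊆ P.points ∧ P₂.points ⊆ P.points ∧
      P₃.points ⊆ P.points ∧ P₄.points ⊆ P.points := by
  classical
  set S : Finset ℝ := Finset.univ.image P₁.t ∪ Finset.univ.image P₂.t ∪
    Finset.univ.image P₃.t ∪ Finset.univ.image P₄.t with hSdef
  have hmemS : ∀ x ∈ S, x ∈ T ∧ x ∈ Icc a b := by
    intro x hx
    simp only [hSdef, Finset.mem_union, Finset.mem_image, Finset.mem_univ, true_and] at hx
    rcases hx with ((⟨i, rfl⟩ | ⟨i, rfl⟩) | ⟨i, rfl⟩) | ⟨i, rfl⟩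
    exacts [⟨P₁.mem i, P₁.t_mem_Icc i⟩, ⟨P₂.mem i, P₂.t_mem_Icc i⟩,
      ⟨P₃.mem i, P₃.t_mem_Icc i⟩, ⟨P₄.mem i, P₄.t_mem_Icc i⟩]
  have hSa : a ∈ S := by
    simp only [hSdef, Finset.mem_union, Finset.mem_image, Finset.mem_univ, true_and]
    exact Or.inl (Or.inl (Or.inl ⟨0, P₁.first⟩))
  have hSb : b ∈ S := by
    simp only [hSdef, Finset.mem_union, Finset.mem_image, Finset.mem_univ, true_and]
    exact Or.inl (Or.inl (Or.inl ⟨Fin.last _, P₁.last⟩))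
  obtain ⟨P, hP⟩ := exists_partition_of_finset T a b S (fun x hx => (hmemS x hx).1)
    hSa hSb (fun x hx => (hmemS x hx).2)
  have hsub : ∀ Q : TSPartition T a b, Finset.univ.image Q.t ⊆ S →
      Q.points ⊆ P.points := by
    intro Q hQ
    rw [hP]
    intro x hx
    obtain ⟨i, rfl⟩ := hx
    exact_mod_cast hQ (Finset.mem_image.2 ⟨i, Finset.mem_univ i, rfl⟩)
  refine ⟨P, hsub P₁ ?_, hsub P₂ ?_, hsub P₃ ?_, hsub P₄ ?_⟩ <;>
    · intro x hx
      simp only [hSdef, Finset.mem_union]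
      tauto

lemma telescope_g {T : Set ℝ} {a b : ℝ} (P : TSPartition T a b) (g : ℝ → ℝ) :
    ∑ i : Fin P.n, (g (P.t i.succ) - g (P.t i.castSucc)) = g b - g a := by
  have key : ∀ (h : ℕ → ℝ), (∀ i : Fin P.n, h i = g (P.t i.castSucc) ∧
      h (i + 1) = g (P.t i.succ)) → h P.n = g b → h 0 = g a →
      ∑ i : Fin P.n, (g (P.t i.succ) - g (P.t i.castSucc)) = g b - g a := by
    intro h hh hb ha
    have : ∑ i : Fin P.n, (g (P.t i.succ) - g (P.t i.castSucc)) =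
        ∑ i : Fin P.n, (h ((i : ℕ) + 1) - h (i : ℕ)) := by
      exact Finset.sum_congr rfl fun i _ => by rw [(hh i).1, (hh i).2]
    rw [this, Fin.sum_univ_eq_sum_range (fun k => h (k + 1) - h k), Finset.sum_range_sub,
      hb, ha]
  set h : ℕ → ℝ := fun k => g (P.t ⟨min k P.n, Nat.lt_succ_of_le (min_le_right _ _)⟩) with hh
  apply key h
  · intro i
    have h2 := i.2
    constructor
    · show g (P.t ⟨min (i : ℕ) P.n, _⟩) = g (P.t i.castSucc)
      have he : (⟨min (i : ℕ) P.n, Nat.lt_succ_of_le (min_le_right _ _)⟩ : Fin (P.n + 1)) =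
          i.castSucc := Fin.ext (by simp only [Fin.coe_castSucc]; omega)
      rw [he]
    · show g (P.t ⟨min ((i : ℕ) + 1) P.n, _⟩) = g (P.t i.succ)
      have he : (⟨min ((i : ℕ) + 1) P.n, Nat.lt_succ_of_le (min_le_right _ _)⟩ : Fin (P.n + 1)) =
          i.succ := Fin.ext (by simp only [Fin.val_succ]; omega)
      rw [he]
  · show g (P.t _) = g b
    have he : (⟨min P.n P.n, Nat.lt_succ_of_le (min_le_right _ _)⟩ : Fin (P.n + 1)) =
        Fin.last P.n := Fin.ext (by simp [Fin.last])
    rw [he, P.last]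
  · show g (P.t _) = g a
    have he : (⟨min 0 P.n, Nat.lt_succ_of_le (min_le_right _ _)⟩ : Fin (P.n + 1)) =
        0 := Fin.ext (by simp)
    rw [he, P.first]


lemma slope_four (G : ℝ → ℝ) (hG : ConvexOn ℝ Set.univ G)
    {α β α' β' : ℝ} (h1 : α < β) (h2 : α' < β') (h3 : α ≤ α') (h4 : β ≤ β') :
    (G β - G α) / (β - α) ≤ (G β' - G α') / (β' - α') := by
  have sym : ∀ p q : ℝ, (G p - G q) / (p - q) = (G q - G p) / (q - p) := by
    intro p q
    rw [← neg_div_neg_eq]; ring_nf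
  have s1 : (G β - G α) / (β - α) ≤ (G β' - G α) / (β' - α) :=
    hG.secant_mono (mem_univ α) (mem_univ β) (mem_univ β') h1.ne' (lt_of_lt_of_le h1 h4).ne' h4
  have s2 : (G α - G β') / (α - β') ≤ (G α' - G β') / (α' - β') :=
    hG.secant_mono (mem_univ β') (mem_univ α) (mem_univ α')
      (lt_of_lt_of_le h1 h4).ne (ne_of_lt h2) h3
  calc (G β - G α) / (β - α) ≤ (G β' - G α) / (β' - α) := s1
    _ = (G α - G β') / (α - β') := sym β' α
    _ ≤ (G α' - G β') / (α' - β') := s2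
    _ = (G β' - G α') / (β' - α') := (sym β' α').symm

lemma core_majorization (n : ℕ) (w u v : Fin n → ℝ) (G : ℝ → ℝ) (K : ℝ)
    (hK : 0 ≤ K) (hw : ∀ i, 0 ≤ w i)
    (hlip : ∀ i, |G (v i) - G (u i)| ≤ K * |v i - u i|)
    (hmono : ∀ i j, v i < u i → u j < v j →
      (G (v i) - G (u i)) / (v i - u i) ≤ (G (v j) - G (u j)) / (v j - u j)) :
    -(K * |∑ i, w i * (v i - u i)|) ≤ ∑ i, w i * (G (v i) - G (u i)) := by
  classical
  set S : Fin n → ℝ := fun i => (G (v i) - G (u i)) / (v i - u i) with hS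
  have habsS : ∀ i, u i ≠ v i → |S i| ≤ K := by
    intro i hne
    have hne' : v i - u i ≠ 0 := sub_ne_zero.2 (Ne.symm hne)
    rw [hS]
    rw [abs_div]
    rw [div_le_iff₀ (abs_pos.2 hne')]
    calc |G (v i) - G (u i)| ≤ K * |v i - u i| := hlip i
      _ = K * |v i - u i| := rfl
  have hexact : ∀ i, u i ≠ v i → G (v i) - G (u i) = S i * (v i - u i) := by
    intro i hne
    have hne' : v i - u i ≠ 0 := sub_ne_zero.2 (Ne.symm hne)
    rw [hS]; exact (div_mul_cancel₀ _ hne').symm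
  obtain ⟨lam, hlam_abs, hlam_pt⟩ :
      ∃ lam : ℝ, |lam| ≤ K ∧ ∀ i, lam * (v i - u i) ≤ G (v i) - G (u i) := by
    set s : Finset (Fin n) := Finset.univ.filter (fun i => v i < u i) with hs
    by_cases hne : s.Nonempty
    · obtain ⟨i₀, hi₀, hsup⟩ := Finset.exists_mem_eq_sup' hne S
      have hi₀' : v i₀ < u i₀ := (Finset.mem_filter.1 hi₀).2
      refine ⟨s.sup' hne S, ?_, ?_⟩
      · rw [hsup]; exact habsS i₀ hi₀'.ne'
      · intro i
        rcases lt_trichotomy (v i) (u i) with hlt | heq | hgt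
        · have hiS : S i ≤ s.sup' hne S :=
            Finset.le_sup' S (Finset.mem_filter.2 ⟨Finset.mem_univ i, hlt⟩)
          rw [hexact i hlt.ne']
          exact mul_le_mul_of_nonpos_right hiS (by linarith)
        · rw [heq]; simp
        · have hiS : s.sup' hne S ≤ S i := by
            rw [hsup]; exact hmono i₀ i hi₀' hgt
          rw [hexact i hgt.ne]
          exact mul_le_mul_of_nonneg_right hiS (by linarith)
    · refine ⟨-K, by rw [abs_neg, abs_of_nonneg hK], ?_⟩
      intro i
      have hge : u i ≤ v i := by
        by_contra h
        exact hne ⟨i, Finset.mem_filter.2 ⟨Finset.mem_univ i, not_le.1 h⟩⟩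
      have : -(K * (v i - u i)) ≤ G (v i) - G (u i) := by
        have h1 := (abs_le.1 (hlip i)).1
        have h2 : |v i - u i| = v i - u i := abs_of_nonneg (by linarith)
        rw [h2] at h1; linarith
      linarith
  calc -(K * |∑ i, w i * (v i - u i)|)
      ≤ -(|lam| * |∑ i, w i * (v i - u i)|) := by
        apply neg_le_neg
        exact mul_le_mul_of_nonneg_right hlam_abs (abs_nonneg _)
    _ = -|lam * ∑ i, w i * (v i - u i)| := by rw [abs_mul]
    _ ≤ lam * ∑ i, w i * (v i - u i) := neg_abs_le _
    _ = ∑ i, w i * (lam * (v i - u i)) := by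
        rw [Finset.mul_sum]; exact Finset.sum_congr rfl fun i _ => by ring
    _ ≤ ∑ i, w i * (G (v i) - G (u i)) :=
        Finset.sum_le_sum fun i _ => mul_le_mul_of_nonneg_left (hlam_pt i) (hw i)


lemma exists_lipschitz_convex_approx (m M : ℝ) (hmM : m ≤ M) (F : ℝ → ℝ)
    (hFc : ContinuousOn F (Icc m M)) (hFx : ConvexOn ℝ (Icc m M) F)
    (η : ℝ) (hη : 0 < η) :
    ∃ K G, 0 ≤ K ∧ ConvexOn ℝ Set.univ G ∧
      (∀ s t : ℝ, |G s - G t| ≤ K * |s - t|) ∧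
      (∀ t ∈ Icc m M, G t ≤ F t ∧ F t ≤ G t + η) := by
  have hmem : m ∈ Icc m M := ⟨le_refl m, hmM⟩
  -- bounds for F
  have hcomp : IsCompact (F '' Icc m M) := isCompact_Icc.image_of_continuousOn hFc
  obtain ⟨Bl, hBl⟩ := hcomp.bddBelow
  obtain ⟨Bu, hBu⟩ := hcomp.bddAbove
  have hBl' : ∀ s ∈ Icc m M, Bl ≤ F s := fun s hs => hBl ⟨s, hs, rfl⟩
  have hBu' : ∀ s ∈ Icc m M, F s ≤ Bu := fun s hs => hBu ⟨s, hs, rfl⟩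
  have hBlu : Bl ≤ Bu := le_trans (hBl' m hmem) (hBu' m hmem)
  -- uniform continuity
  have huc : UniformContinuousOn F (Icc m M) :=
    isCompact_Icc.uniformContinuousOn_of_continuous hFc
  rw [Metric.uniformContinuousOn_iff] at huc
  obtain ⟨δ, hδ, hδ'⟩ := huc η hη
  set K : ℝ := max 0 ((Bu - Bl) / δ) with hKdef
  have hK : 0 ≤ K := le_max_left _ _
  have hKδ : Bu - Bl ≤ K * δ := by
    have : (Bu - Bl) / δ ≤ K := le_max_right _ _
    calc Bu - Bl = (Bu - Bl) / δ * δ := by field_simp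
      _ ≤ K * δ := mul_le_mul_of_nonneg_right this hδ.le
  set A : ℝ → ℝ → ℝ := fun t s => F s + K * |t - s| with hA
  set G : ℝ → ℝ := fun t => sInf (A t '' Icc m M) with hG
  have hne : ∀ t : ℝ, (A t '' Icc m M).Nonempty := fun t => ⟨A t m, m, hmem, rfl⟩
  have hbdd : ∀ t : ℝ, BddBelow (A t '' Icc m M) := by
    intro t
    refine ⟨Bl, ?_⟩
    rintro r ⟨s, hs, rfl⟩
    have := hBl' s hs
    have : 0 ≤ K * |t - s| := mul_nonneg hK (abs_nonneg _)
    simp only [hA]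
    linarith [hBl' s hs]
  have hGle : ∀ s ∈ Icc m M, ∀ t, G t ≤ A t s := fun s hs t =>
    csInf_le (hbdd t) ⟨s, hs, rfl⟩
  refine ⟨K, G, hK, ?_, ?_, ?_⟩
  · -- convexity
    have helper : ∀ (c : ℝ), 0 ≤ c → ∀ (w Z : ℝ),
        (∀ s ∈ Icc m M, Z ≤ c * A w s) → Z ≤ c * G w := by
      intro c hc w Z hZ
      rcases hc.eq_or_lt with rfl | hc'
      · simpa using hZ m hmem
      · have : Z / c ≤ G w := by
          apply le_csInf (hne w)
          rintro r ⟨s, hs, rfl⟩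
          rw [div_le_iff₀ hc', mul_comm]
          exact hZ s hs
        calc Z = c * (Z / c) := by field_simp
          _ ≤ c * G w := mul_le_mul_of_nonneg_left this hc'.le
    constructor
    · exact convex_univ
    · intro p _ q _ α β hα hβ hαβ
      simp only [smul_eq_mul]
      have key : ∀ s₁ ∈ Icc m M, ∀ s₂ ∈ Icc m M,
          G (α * p + β * q) ≤ α * A p s₁ + β * A q s₂ := by
        intro s₁ hs₁ s₂ hs₂
        have hcomb : α * s₁ + β * s₂ ∈ Icc m M := by
          have := (convex_Icc m M) hs₁ hs₂ hα hβ hαβ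
          simpa using this
        have h1 : G (α * p + β * q) ≤ A (α * p + β * q) (α * s₁ + β * s₂) :=
          hGle _ hcomb _
        have h2 : F (α * s₁ + β * s₂) ≤ α * F s₁ + β * F s₂ := by
          have := hFx.2 hs₁ hs₂ hα hβ hαβ
          simpa using this
        have h3 : |(α * p + β * q) - (α * s₁ + β * s₂)| ≤ α * |p - s₁| + β * |q - s₂| := by
          have : (α * p + β * q) - (α * s₁ + β * s₂) = α * (p - s₁) + β * (q - s₂) := by ring
          rw [this]
          calc |α * (p - s₁) + β * (q - s₂)| ≤ |α * (p - s₁)| + |β * (q - s₂)| := abs_add_le _ _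
            _ = α * |p - s₁| + β * |q - s₂| := by
                rw [abs_mul, abs_mul, abs_of_nonneg hα, abs_of_nonneg hβ]
        have h4 : K * |(α * p + β * q) - (α * s₁ + β * s₂)| ≤
            K * (α * |p - s₁| + β * |q - s₂|) := mul_le_mul_of_nonneg_left h3 hK
        simp only [hA] at h1 ⊢
        calc G (α * p + β * q) ≤ F (α * s₁ + β * s₂) + K * |(α * p + β * q) - (α * s₁ + β * s₂)| := h1
          _ ≤ (α * F s₁ + β * F s₂) + K * (α * |p - s₁| + β * |q - s₂|) := by linarith
          _ = α * (F s₁ + K * |p - s₁|) + β * (F s₂ + K * |q - s₂|) := by ring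
      have step1 : ∀ s₁ ∈ Icc m M, G (α * p + β * q) ≤ α * A p s₁ + β * G q := by
        intro s₁ hs₁
        have := helper β hβ q (G (α * p + β * q) - α * A p s₁) (fun s₂ hs₂ => by
          have := key s₁ hs₁ s₂ hs₂; linarith)
        linarith
      have step2 := helper α hα p (G (α * p + β * q) - β * G q) (fun s₁ hs₁ => by
        have := step1 s₁ hs₁; linarith)
      linarith
  · -- Lipschitz
    have hhalf : ∀ s t : ℝ, G s ≤ G t + K * |s - t| := by
      intro s t
      have : G s - K * |s - t| ≤ G t := by
        apply le_csInf (hne t)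
        rintro r ⟨σ, hσ, rfl⟩
        have h1 : G s ≤ A s σ := hGle σ hσ s
        have h2 : |s - σ| ≤ |t - σ| + |s - t| := by
          calc |s - σ| = |(t - σ) + (s - t)| := by ring_nf
            _ ≤ |t - σ| + |s - t| := abs_add_le _ _
        have h3 : K * |s - σ| ≤ K * |t - σ| + K * |s - t| := by
          have := mul_le_mul_of_nonneg_left h2 hK
          linarith [this]
        simp only [hA] at h1 ⊢
        linarith
      linarith
    intro s t
    rw [abs_sub_le_iff]
    constructor
    · have := hhalf s t; linarith
    · have := hhalf t s
      have h : |t - s| = |s - t| := abs_sub_comm t s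
      linarith [h ▸ this]
  · -- approximation
    intro t ht
    constructor
    · have := hGle t ht t
      simpa [hA] using this
    · have : F t - η ≤ G t := by
        apply le_csInf (hne t)
        rintro r ⟨s, hs, rfl⟩
        simp only [hA]
        by_cases hd : dist t s < δ
        · have := hδ' t ht s hs hd
          rw [Real.dist_eq] at this
          have h1 : F t - F s ≤ |F t - F s| := le_abs_self _
          have h2 : 0 ≤ K * |t - s| := mul_nonneg hK (abs_nonneg _)
          linarith
        · push_neg at hd
          rw [Real.dist_eq] at hd
          have h1 : K * δ ≤ K * |t - s| := mul_le_mul_of_nonneg_left hd hK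
          have h2 : F t - F s ≤ Bu - Bl := by
            have := hBu' t ht; have := hBl' s hs; linarith
          linarith
      linarith

/-- majorisation theorem for RS Δ-integrals. -/
theorem rs_majorisation (T : Set ℝ) (hT : IsClosed T) (a b : ℝ)
    (ha : a ∈ T) (hb : b ∈ T) (hab : a < b) (I : Set ℝ) (hI : I.OrdConnected)
    (x y p g : ℝ → ℝ)
    (hx : ∀ t ∈ Set.Icc a b ∩ T, x t ∈ I)
    (hy : ∀ t ∈ Set.Icc a b ∩ T, y t ∈ I)
    (hxc : RdContinuousOn T a b x) (hyc : RdContinuousOn T a b y)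
    (hpc : RdContinuousOn T a b p) (hgc : RdContinuousOn T a b g)
    (hg : MonotoneOn g (Set.Icc a b ∩ T))
    (hp : ∀ t ∈ Set.Icc a b ∩ T, 0 ≤ p t)
    (hpb : ∃ M, ∀ t ∈ Set.Icc a b ∩ T, |p t| ≤ M)
    (F : ℝ → ℝ) (hF : ConvexOn ℝ I F) (hFc : ContinuousOn F I)
    (hmono : (MonotoneOn y (Set.Icc a b ∩ T) ∧
        MonotoneOn (fun t => x t - y t) (Set.Icc a b ∩ T)) ∨
      (AntitoneOn y (Set.Icc a b ∩ T) ∧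
        AntitoneOn (fun t => x t - y t) (Set.Icc a b ∩ T)))
    (Ipx Ipy IFx IFy : ℝ)
    (hIpx : IsRSIntegral T a b (fun t => p t * x t) g Ipx)
    (hIpy : IsRSIntegral T a b (fun t => p t * y t) g Ipy)
    (hIFx : IsRSIntegral T a b (fun t => p t * F (x t)) g IFx)
    (hIFy : IsRSIntegral T a b (fun t => p t * F (y t)) g IFy)
    (heq : Ipy = Ipx) :
    IFy ≤ IFx := by

  classical
  set D : Set ℝ := Icc a b ∩ T with hD
  have haD : a ∈ D := ⟨⟨le_refl a, hab.le⟩, ha⟩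
  have hbD : b ∈ D := ⟨⟨hab.le, le_refl b⟩, hb⟩
  -- x is monotone/antitone together with y
  set m : ℝ := min (min (x a) (y a)) (min (x b) (y b)) with hm
  set M : ℝ := max (max (x a) (y a)) (max (x b) (y b)) with hM
  have hmM : m ≤ M := le_trans (le_trans (min_le_left _ _) (min_le_left _ _))
    (le_trans (le_max_left _ _) (le_max_left _ _))
  have hminI : ∀ c d : ℝ, c ∈ I → d ∈ I → min c d ∈ I := by
    intro c d hc hd; rcases min_choice c d with h | h <;> rw [h] <;> assumption
  have hmaxI : ∀ c d : ℝ, c ∈ I → d ∈ I → max c d ∈ I := by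
    intro c d hc hd; rcases max_choice c d with h | h <;> rw [h] <;> assumption
  have hmI : m ∈ I := hminI _ _ (hminI _ _ (hx a haD) (hy a haD)) (hminI _ _ (hx b hbD) (hy b hbD))
  have hMI : M ∈ I := hmaxI _ _ (hmaxI _ _ (hx a haD) (hy a haD)) (hmaxI _ _ (hx b hbD) (hy b hbD))
  have hIccI : Icc m M ⊆ I := hI.out hmI hMI
  -- value range
  have hval : ∀ s ∈ D, y s ∈ Icc m M ∧ x s ∈ Icc m M := by
    intro s hsD
    have hsa : a ≤ s := hsD.1.1
    have hsb : s ≤ b := hsD.1.2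
    rcases hmono with ⟨h1, h2⟩ | ⟨h1, h2⟩
    · have hxm : MonotoneOn x D := by
        intro s₁ hs₁ s₂ hs₂ hs12
        have e1 := h1 hs₁ hs₂ hs12
        have e2 := h2 hs₁ hs₂ hs12
        simp only at e2
        linarith
      have hy1 : y a ≤ y s := h1 haD hsD hsa
      have hy2 : y s ≤ y b := h1 hsD hbD hsb
      have hx1 : x a ≤ x s := hxm haD hsD hsa
      have hx2 : x s ≤ x b := hxm hsD hbD hsb
      refine ⟨⟨?_, ?_⟩, ⟨?_, ?_⟩⟩
      · exact le_trans (le_trans (min_le_left _ _) (min_le_right _ _)) hy1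
      · exact le_trans hy2 (le_trans (le_max_right _ _) (le_max_right _ _))
      · exact le_trans (le_trans (min_le_left _ _) (min_le_left _ _)) hx1
      · exact le_trans hx2 (le_trans (le_max_left _ _) (le_max_right _ _))
    · have hxm : AntitoneOn x D := by
        intro s₁ hs₁ s₂ hs₂ hs12
        have e1 := h1 hs₁ hs₂ hs12
        have e2 := h2 hs₁ hs₂ hs12
        simp only at e2
        linarith
      have hy1 : y b ≤ y s := h1 hsD hbD hsb
      have hy2 : y s ≤ y a := h1 haD hsD hsa
      have hx1 : x b ≤ x s := hxm hsD hbD hsb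
      have hx2 : x s ≤ x a := hxm haD hsD hsa
      refine ⟨⟨?_, ?_⟩, ⟨?_, ?_⟩⟩
      · exact le_trans (le_trans (min_le_right _ _) (min_le_right _ _)) hy1
      · exact le_trans hy2 (le_trans (le_max_right _ _) (le_max_left _ _))
      · exact le_trans (le_trans (min_le_right _ _) (min_le_left _ _)) hx1
      · exact le_trans hx2 (le_trans (le_max_left _ _) (le_max_left _ _))
  -- ordering fact for crossing structure
  have horder' : ∀ s ∈ D, ∀ t ∈ D, x s - y s < 0 → 0 ≤ x t - y t →
      y s ≤ y t ∧ x s ≤ x t := by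
    intro s hsD t htD hst h0t
    rcases hmono with ⟨h1, h2⟩ | ⟨h1, h2⟩
    · have hxm : MonotoneOn x D := by
        intro s₁ hs₁ s₂ hs₂ hs12
        have e1 := h1 hs₁ hs₂ hs12
        have e2 := h2 hs₁ hs₂ hs12
        simp only at e2
        linarith
      have hle : s ≤ t := by
        by_contra hc
        push_neg at hc
        have := h2 htD hsD hc.le
        simp only at this
        linarith
      exact ⟨h1 hsD htD hle, hxm hsD htD hle⟩
    · have hxm : AntitoneOn x D := by
        intro s₁ hs₁ s₂ hs₂ hs12
        have e1 := h1 hs₁ hs₂ hs12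
        have e2 := h2 hs₁ hs₂ hs12
        simp only at e2
        linarith
      have hle : t ≤ s := by
        by_contra hc
        push_neg at hc
        have := h2 hsD htD hc.le
        simp only at this
        linarith
      exact ⟨h1 htD hsD hle, hxm htD hsD hle⟩
  -- convexity / continuity of F on [m, M]
  have hFcc : ContinuousOn F (Icc m M) := hFc.mono hIccI
  have hFxx : ConvexOn ℝ (Icc m M) F := hF.subset hIccI (convex_Icc m M)
  obtain ⟨Mp, hMp⟩ := hpb
  have hMp0 : 0 ≤ Mp := le_trans (abs_nonneg _) (hMp a haD)
  have hgab : g a ≤ g b := hg haD hbD hab.le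
  set C0 : ℝ := Mp * (g b - g a) with hC0
  have hC00 : 0 ≤ C0 := mul_nonneg hMp0 (by linarith)
  -- main estimate
  apply le_of_forall_pos_le_add
  intro θ hθ
  set η : ℝ := θ / (2 * (C0 + 1)) with hηdef
  have hη : 0 < η := div_pos hθ (by linarith)
  obtain ⟨K, G, hK, hGconv, hGlip, hGapprox⟩ :=
    exists_lipschitz_convex_approx m M hmM F hFcc hFxx η hη
  set ε : ℝ := θ / (4 * (1 + K)) with hεdef
  have hε : 0 < ε := div_pos hθ (by linarith)
  obtain ⟨P₁, hP₁⟩ := hIpx ε hε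
  obtain ⟨P₂, hP₂⟩ := hIpy ε hε
  obtain ⟨P₃, hP₃⟩ := hIFx ε hε
  obtain ⟨P₄, hP₄⟩ := hIFy ε hε
  obtain ⟨P, hs1, hs2, hs3, hs4⟩ := exists_refinement T a b P₁ P₂ P₃ P₄
  set X : Fin P.n → ℝ := fun i => P.t i.castSucc with hX
  have hXsel : IsSelection P X := fun i =>
    ⟨P.mem _, le_refl _, P.strictMono (Fin.castSucc_lt_succ (i := i))⟩
  have hXD : ∀ i, X i ∈ D := fun i => ⟨P.t_mem_Icc _, P.mem _⟩
  have e1 := hP₁ P hs1 X hXsel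
  have e2 := hP₂ P hs2 X hXsel
  have e3 := hP₃ P hs3 X hXsel
  have e4 := hP₄ P hs4 X hXsel
  set w : Fin P.n → ℝ := fun i => p (X i) * (g (P.t i.succ) - g (P.t i.castSucc)) with hw
  set u : Fin P.n → ℝ := fun i => y (X i) with hu
  set v : Fin P.n → ℝ := fun i => x (X i) with hv
  have hDg : ∀ i : Fin P.n, 0 ≤ g (P.t i.succ) - g (P.t i.castSucc) := by
    intro i
    have := hg ⟨P.t_mem_Icc i.castSucc, P.mem i.castSucc⟩ ⟨P.t_mem_Icc i.succ, P.mem i.succ⟩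
      (P.strictMono (Fin.castSucc_lt_succ (i := i))).le
    linarith
  have hwn : ∀ i, 0 ≤ w i := fun i => mul_nonneg (hp _ (hXD i)) (hDg i)
  -- identify the four sums
  have hSx : RSsum (fun t => p t * x t) g P X = ∑ i, w i * v i := by
    simp only [RSsum, hw, hv]
    exact Finset.sum_congr rfl fun i _ => by ring
  have hSy : RSsum (fun t => p t * y t) g P X = ∑ i, w i * u i := by
    simp only [RSsum, hw, hu]
    exact Finset.sum_congr rfl fun i _ => by ring
  have hSFx : RSsum (fun t => p t * F (x t)) g P X = ∑ i, w i * F (v i) := by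
    simp only [RSsum, hw, hv]
    exact Finset.sum_congr rfl fun i _ => by ring
  have hSFy : RSsum (fun t => p t * F (y t)) g P X = ∑ i, w i * F (u i) := by
    simp only [RSsum, hw, hu]
    exact Finset.sum_congr rfl fun i _ => by ring
  rw [hSx] at e1
  rw [hSy] at e2
  rw [hSFx] at e3
  rw [hSFy] at e4
  -- bound on the linear difference
  have hsub : ∑ i, w i * (v i - u i) = (∑ i, w i * v i) - ∑ i, w i * u i := by
    rw [← Finset.sum_sub_distrib]
    exact Finset.sum_congr rfl fun i _ => by ring
  have hDabs : |∑ i, w i * (v i - u i)| ≤ 2 * ε := by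
    have h1 := abs_lt.1 e1
    have h2 := abs_lt.1 e2
    rw [heq] at h2
    rw [abs_le, hsub]
    exact ⟨by linarith [h1.1, h2.2], by linarith [h1.2, h2.1]⟩
  -- core majorization with G
  have hlip' : ∀ i, |G (v i) - G (u i)| ≤ K * |v i - u i| := fun i => hGlip _ _
  have hmono' : ∀ i j, v i < u i → u j < v j →
      (G (v i) - G (u i)) / (v i - u i) ≤ (G (v j) - G (u j)) / (v j - u j) := by
    intro i j hvi huj
    have hord := horder' (X i) (hXD i) (X j) (hXD j) (by simp only [hu, hv] at hvi ⊢; linarith)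
      (by simp only [hu, hv] at huj ⊢; linarith)
    have h3 : u i ≤ u j := hord.1
    have h4 : v i ≤ v j := hord.2
    have sym : (G (v i) - G (u i)) / (v i - u i) = (G (u i) - G (v i)) / (u i - v i) := by
      rw [← neg_div_neg_eq]; ring_nf
    rw [sym]
    exact slope_four G hGconv hvi huj (by linarith) (by linarith)
  have hcore := core_majorization P.n w u v G K hK hwn hlip' hmono'
  -- chain of inequalities
  have hvalu : ∀ i, u i ∈ Icc m M := fun i => (hval (X i) (hXD i)).1
  have hvalv : ∀ i, v i ∈ Icc m M := fun i => (hval (X i) (hXD i)).2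
  have A1 : ∑ i, w i * F (u i) ≤ (∑ i, w i * G (u i)) + η * ∑ i, w i := by
    have step : ∑ i, w i * F (u i) ≤ ∑ i, (w i * G (u i) + η * w i) := by
      apply Finset.sum_le_sum
      intro i _
      have := (hGapprox (u i) (hvalu i)).2
      nlinarith [hwn i]
    rw [Finset.sum_add_distrib, ← Finset.mul_sum] at step
    exact step
  have A3 : ∑ i, w i * G (u i) ≤ (∑ i, w i * G (v i)) + K * |∑ i, w i * (v i - u i)| := by
    have hgsub : ∑ i, w i * (G (v i) - G (u i)) =
        (∑ i, w i * G (v i)) - ∑ i, w i * G (u i) := by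
      rw [← Finset.sum_sub_distrib]
      exact Finset.sum_congr rfl fun i _ => by ring
    rw [hgsub] at hcore
    linarith
  have A4 : ∑ i, w i * G (v i) ≤ ∑ i, w i * F (v i) :=
    Finset.sum_le_sum fun i _ => mul_le_mul_of_nonneg_left (hGapprox (v i) (hvalv i)).1 (hwn i)
  have A5 : ∑ i, w i ≤ C0 := by
    have step : ∑ i, w i ≤ ∑ i : Fin P.n, Mp * (g (P.t i.succ) - g (P.t i.castSucc)) := by
      apply Finset.sum_le_sum
      intro i _
      exact mul_le_mul_of_nonneg_right (le_trans (le_abs_self _) (hMp _ (hXD i))) (hDg i)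
    rw [← Finset.mul_sum, telescope_g P g] at step
    exact step
  -- numeric assembly
  have hKD : K * |∑ i, w i * (v i - u i)| ≤ 2 * ε * K :=
    le_trans (mul_le_mul_of_nonneg_left hDabs hK) (by ring_nf; rfl)
  have hηC : η * ∑ i, w i ≤ θ / 2 := by
    have h1 : η * ∑ i, w i ≤ η * (C0 + 1) := by
      apply mul_le_mul_of_nonneg_left _ hη.le
      linarith
    have h2 : η * (C0 + 1) = θ / 2 := by
      rw [hηdef]; field_simp
    linarith
  have hεK : 2 * ε + 2 * ε * K = θ / 2 := by
    rw [hεdef]; field_simp; ring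
  have h3 := abs_lt.1 e3
  have h4 := abs_lt.1 e4
  linarith
end
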